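/- Let ω > 0. Then, as μ → ∞, ∑_{l=1}^{∞} max(0, 1 − e^{l²ω²/4}/μ) ∼ 2 ω^{−1} (log μ)^{1/2}; that is, lim_{μ→∞} (∑'_{l ≥ 1} max(0, 1 − e^{l²ω²/4}/μ)) / (2 ω^{−1} (log μ)^{1/2}) = 1. -/

import Mathlib

set_option maxHeartbeats 1000000


open Real Filter Finset

lemma sqrt_tendsto_atTop : Tendsto Real.sqrt atTop atTop := by
  refine tendsto_atTop_atTop.2 fun b => ⟨b ^ 2 + 1, fun x hx => ?_⟩
  rcases le_or_gt b 0 with hb | hb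
  · exact hb.trans (Real.sqrt_nonneg x)
  · have : b ^ 2 ≤ x := by nlinarith
    calc b = Real.sqrt (b ^ 2) := by rw [Real.sqrt_sq hb.le]
    _ ≤ Real.sqrt x := Real.sqrt_le_sqrt this

lemma stmt_14_key (ω : ℝ) (hω : 0 < ω) (ε : ℝ) (hε : 0 < ε) (hε2 : ε ≤ 1/2) :
    ∀ᶠ μ : ℝ in atTop,
      dist ((∑' l : ℕ, max 0 (1 - Real.exp (((l : ℝ) + 1) ^ 2 * ω ^ 2 / 4) / μ)) /
          (2 * ω⁻¹ * Real.sqrt (Real.log μ))) 1 < ε := by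
  set c : ℝ := (1 - ε/4)^2 - 1 with hc
  have hcneg : c < 0 := by
    have h2 : ε^2/16 - ε/2 < 0 := by nlinarith
    calc c = ε^2/16 - ε/2 := by rw [hc]; ring
    _ < 0 := h2
  have hLtop : Tendsto (fun μ : ℝ => 2 * ω⁻¹ * Real.sqrt (Real.log μ)) atTop atTop := by
    apply Tendsto.const_mul_atTop (by positivity : (0:ℝ) < 2 * ω⁻¹)
    exact sqrt_tendsto_atTop.comp Real.tendsto_log_atTop
  have hrpow : Tendsto (fun μ : ℝ => μ ^ c) atTop (nhds 0) := by
    have := tendsto_rpow_neg_atTop (y := -c) (by linarith)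
    simpa using this
  filter_upwards [eventually_gt_atTop 1, hLtop.eventually_gt_atTop (4/ε),
    hrpow.eventually (gt_mem_nhds (by linarith : (0:ℝ) < ε/4))] with μ hμ1 hLbig hrp
  have hμ0 : (0:ℝ) < μ := by linarith
  have hlog : 0 < Real.log μ := Real.log_pos hμ1
  set L : ℝ := 2 * ω⁻¹ * Real.sqrt (Real.log μ) with hLdef
  have hL0 : 0 < L := by positivity
  have hLsq : L ^ 2 * ω ^ 2 / 4 = Real.log μ := by
    have : Real.sqrt (Real.log μ) ^ 2 = Real.log μ := Real.sq_sqrt hlog.le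
    have hω2 : ω ^ 2 ≠ 0 := by positivity
    have hi : (ω ^ 2)⁻¹ * ω ^ 2 = 1 := inv_mul_cancel₀ hω2
    rw [hLdef, mul_pow, mul_pow, inv_pow, this]
    linear_combination (Real.log μ) * hi
  set g : ℕ → ℝ := fun k => max 0 (1 - Real.exp (((k:ℝ)+1)^2 * ω^2/4)/μ) with hg
  have hgnonneg : ∀ k, 0 ≤ g k := fun k => le_max_left _ _
  have vanish : ∀ k : ℕ, L ≤ (k:ℝ)+1 → g k = 0 := by
    intro k hk
    have h1 : Real.log μ ≤ ((k:ℝ)+1)^2 * ω^2/4 := by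
      rw [← hLsq]
      have : L ^ 2 ≤ ((k:ℝ)+1)^2 := by nlinarith
      nlinarith [sq_nonneg ω]
    have h2 : μ ≤ Real.exp (((k:ℝ)+1)^2 * ω^2/4) := by
      calc μ = Real.exp (Real.log μ) := (Real.exp_log hμ0).symm
      _ ≤ _ := Real.exp_le_exp.2 h1
    have : 1 - Real.exp (((k:ℝ)+1)^2 * ω^2/4)/μ ≤ 0 := by
      have := (one_le_div hμ0).2 h2
      linarith
    simpa [hg] using max_eq_left this
  set N : ℕ := ⌈L⌉₊ with hN
  have hout : ∀ k ∉ Finset.range N, g k = 0 := by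
    intro k hk
    apply vanish
    have hkN : N ≤ k := by simpa [Finset.mem_range, not_lt] using hk
    have h1 : L ≤ (N:ℝ) := Nat.le_ceil L
    have h2 : (N:ℝ) ≤ (k:ℝ) := Nat.cast_le.2 hkN
    linarith
  have hsummable : Summable g := summable_of_ne_finset_zero hout
  have htsum_eq : ∑' k, g k = ∑ k ∈ Finset.range N, g k := tsum_eq_sum hout
  have hupper : ∑' k, g k ≤ L + 1 := by
    rw [htsum_eq]
    calc ∑ k ∈ Finset.range N, g k ≤ ∑ _k ∈ Finset.range N, (1:ℝ) := by
          refine Finset.sum_le_sum fun k _ => ?_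
          have : 0 ≤ Real.exp (((k:ℝ)+1)^2 * ω^2/4)/μ := by positivity
          simp only [hg]
          apply max_le <;> linarith
    _ = (N:ℝ) := by simp
    _ ≤ L + 1 := (Nat.ceil_lt_add_one hL0.le).le
  set M : ℕ := ⌊(1 - ε/4) * L⌋₊ with hM
  have hdel : (0:ℝ) < 1 - ε/4 := by linarith
  have hM_le : (M:ℝ) ≤ (1 - ε/4) * L := Nat.floor_le (by positivity)
  have hM_ge : (1 - ε/4) * L - 1 < (M:ℝ) := Nat.sub_one_lt_floor _
  have hterm : ∀ k ∈ Finset.range M, 1 - μ ^ c ≤ g k := by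
    intro k hk
    have hkM : (k:ℝ) + 1 ≤ (M:ℝ) := by
      have : k < M := Finset.mem_range.1 hk
      exact_mod_cast this
    have h1 : ((k:ℝ)+1)^2 * ω^2/4 ≤ (1 - ε/4)^2 * Real.log μ := by
      have hk1 : (0:ℝ) ≤ (k:ℝ) + 1 := by positivity
      have h2 : ((k:ℝ)+1)^2 ≤ ((1 - ε/4) * L)^2 := by nlinarith
      rw [← hLsq]; nlinarith [sq_nonneg ω]
    have h2 : Real.exp (((k:ℝ)+1)^2 * ω^2/4) ≤ μ ^ ((1 - ε/4)^2) := by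
      rw [Real.rpow_def_of_pos hμ0]
      exact Real.exp_le_exp.2 (by linarith [h1])
    have h3 : Real.exp (((k:ℝ)+1)^2 * ω^2/4) / μ ≤ μ ^ c := by
      rw [hc, Real.rpow_sub hμ0, Real.rpow_one]
      exact div_le_div_of_nonneg_right h2 hμ0.le |>.trans_eq rfl
    refine le_trans (by linarith) (le_max_right _ _)
  have hlower : (M:ℝ) * (1 - μ ^ c) ≤ ∑' k, g k := by
    calc (M:ℝ) * (1 - μ ^ c) = ∑ _k ∈ Finset.range M, (1 - μ ^ c) := by simp [mul_comm]; ring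
    _ ≤ ∑ k ∈ Finset.range M, g k := Finset.sum_le_sum hterm
    _ ≤ ∑' k, g k := hsummable.sum_le_tsum _ (fun k _ => hgnonneg k)
  have hμc0 : 0 < μ ^ c := Real.rpow_pos_of_pos hμ0 c
  have hLinv : 1 / L < ε / 4 := by
    rw [div_lt_iff₀ hL0]
    have h4ε : 0 < 4 / ε := by positivity
    calc (1:ℝ) = ε/4 * (4/ε) := by field_simp
    _ < ε/4 * L := by exact mul_lt_mul_of_pos_left hLbig (by positivity)
  rw [Real.dist_eq, abs_sub_lt_iff]
  constructor
  · -- upper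
    have : (∑' k, g k) / L ≤ (L + 1) / L := div_le_div_of_nonneg_right hupper hL0.le |>.trans_eq rfl
    have h2 : (L + 1) / L = 1 + 1 / L := by field_simp
    simp only [hg] at this
    nlinarith [this, hLinv, hε]
  · -- lower
    have hr : (M:ℝ) * (1 - μ ^ c) / L ≤ (∑' k, g k) / L :=
      div_le_div_of_nonneg_right hlower hL0.le |>.trans_eq rfl
    have hεL : 4 < L * ε := (div_lt_iff₀ hε).1 hLbig
    have hb1 : 0 < 1 - μ ^ c := by linarith
    have hA : 0 < (1 - ε/4) * L - 1 := by nlinarith [mul_pos hε hL0]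
    have hkey : (1 - ε) * L < (M:ℝ) * (1 - μ ^ c) := by
      have h1 : ((1 - ε/4) * L - 1) * (1 - μ ^ c) ≤ (M:ℝ) * (1 - μ ^ c) :=
        mul_le_mul_of_nonneg_right hM_ge.le hb1.le
      have h2 : ((1 - ε/4) * L - 1) * (1 - ε/4) ≤ ((1 - ε/4) * L - 1) * (1 - μ ^ c) :=
        mul_le_mul_of_nonneg_left (by linarith) hA.le
      have h3 : (1 - ε) * L < ((1 - ε/4) * L - 1) * (1 - ε/4) := by
        nlinarith [hεL, mul_pos hε hL0, mul_nonneg hε.le (mul_pos hε hL0).le]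
      linarith
    have : (1 - ε) < (∑' k, g k) / L := by
      rw [lt_div_iff₀ hL0]
      calc (1 - ε) * L < (M:ℝ) * (1 - μ ^ c) := hkey
      _ ≤ ∑' k, g k := hlower
    simp only [hg] at this
    linarith

/-- As `μ → ∞`, `∑_{l=1}^∞ max (0, 1 − e^{l²ω²/4}/μ) ∼ 2 ω⁻¹ (log μ)^{1/2}`. -/
theorem stmt_14 (ω : ℝ) (hω : 0 < ω) :
    Tendsto (fun μ : ℝ =>
        (∑' l : ℕ, max 0 (1 - Real.exp (((l : ℝ) + 1) ^ 2 * ω ^ 2 / 4) / μ)) /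
          (2 * ω⁻¹ * Real.sqrt (Real.log μ)))
      atTop (nhds 1) := by
  rw [Metric.tendsto_nhds]
  intro ε hε
  have hmin : 0 < min ε (1/2) := lt_min hε (by norm_num)
  filter_upwards [stmt_14_key ω hω (min ε (1/2)) hmin (min_le_right _ _)] with μ h
  exact h.trans_le (min_le_left _ _)
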